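/- Let c ≥ 0 and P > c be real numbers, and let ψ, R : ℝ → ℝ be functions differentiable on [c, P] with ψ(x) > 0 and R(x) > 0 for all x ∈ [c, P]. Suppose ψ is strictly decreasing (ψ'(x) < 0), R'(x) = k for a constant k ≥ 0 (equal to the sum ∑_{h}(1 − 1/n^t_{≥h}) of pool-share coefficients), and the hazard-rate condition −ψ'(x)/ψ(x) ≥ k/R(x) holds for all x ∈ [c, P]. Then the expected payoff E(x) = ψ(x)·R(x) satisfies E'(x) ≤ 0 on [c, P], so E is maximized over [c, P] at x = c. In particular, reporting the true cost ĉ_s = c_s maximizes the provider's expected payoff under any cheapest matching algorithm. -/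
import Mathlib


/-- under the hazard-rate (matching-competitiveness) condition, the
expected payoff `E = ψ · R` is nonincreasing on `[c, P]` and is therefore maximized
at the true cost `c`: reporting the true cost maximizes expected payoff. -/
theorem truthful_report_optimal (c P : ℝ) (hc : 0 ≤ c) (hcP : c < P)
    (ψ R ψ' R' : ℝ → ℝ) (k : ℝ) (hk : 0 ≤ k)
    (hψdiff : ∀ x ∈ Set.Icc c P, HasDerivWithinAt ψ (ψ' x) (Set.Icc c P) x)
    (hRdiff : ∀ x ∈ Set.Icc c P, HasDerivWithinAt R (R' x) (Set.Icc c P) x)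
    (hψpos : ∀ x ∈ Set.Icc c P, 0 < ψ x)
    (hRpos : ∀ x ∈ Set.Icc c P, 0 < R x)
    (hψdec : ∀ x ∈ Set.Icc c P, ψ' x < 0)
    (hR' : ∀ x ∈ Set.Icc c P, R' x = k)
    (hhazard : ∀ x ∈ Set.Icc c P, k / R x ≤ -ψ' x / ψ x) :
    (∀ x ∈ Set.Icc c P, ψ' x * R x + ψ x * R' x ≤ 0) ∧
    (∀ x ∈ Set.Icc c P, ψ x * R x ≤ ψ c * R c) := by
  have hderiv : ∀ x ∈ Set.Icc c P, ψ' x * R x + ψ x * R' x ≤ 0 := by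
    intro x hx
    have hψx := hψpos x hx
    have hRx := hRpos x hx
    have hhz := hhazard x hx
    rw [hR' x hx]
    rw [div_le_div_iff₀ hRx hψx] at hhz
    nlinarith
  refine ⟨hderiv, ?_⟩
  have hE : ∀ x ∈ interior (Set.Icc c P),
      HasDerivWithinAt (fun y => ψ y * R y) (ψ' x * R x + ψ x * R' x)
        (interior (Set.Icc c P)) x := by
    intro x hx
    have hx' : x ∈ Set.Icc c P := interior_subset hx
    exact (((hψdiff x hx').mul (hRdiff x hx')).mono interior_subset)
  have hcont : ContinuousOn (fun y => ψ y * R y) (Set.Icc c P) :=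
    ContinuousOn.mul (fun x hx => (hψdiff x hx).continuousWithinAt)
      (fun x hx => (hRdiff x hx).continuousWithinAt)
  have hanti : AntitoneOn (fun y => ψ y * R y) (Set.Icc c P) :=
    antitoneOn_of_hasDerivWithinAt_nonpos (convex_Icc c P) hcont hE
      (fun x hx => hderiv x (interior_subset hx))
  intro x hx
  exact hanti ⟨le_refl c, le_of_lt hcP⟩ hx hx.1
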